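/- Fix d ≥ 2. For n ∈ N, let C_n be the set of all *-connected W ⊆ Z^d such that #W = n and W encloses 0. Then #C_n ≤ n · ((3^d)^{3^d} / (3^d − 1)^{3^d − 1})^n. -/

import Mathlib

open MeasureTheory ProbabilityTheory Filter Set
open scoped ENNReal NNReal

namespace FPPBoundary

/-- Vertices of `ℤ^d`. -/
abbrev V (d : ℕ) := Fin d → ℤ

/-- Nearest-neighbor adjacency in `ℤ^d`. -/
def adj {d : ℕ} (x y : V d) : Prop := (∑ i, |x i - y i|) = 1

/-- `e` is a nearest-neighbor edge of `ℤ^d`. -/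
def IsEdge {d : ℕ} (e : Sym2 (V d)) : Prop := ∃ x y : V d, adj x y ∧ e = s(x, y)

/-- The set of nearest-neighbor edges, as a type. -/
abbrev Edge (d : ℕ) := {e : Sym2 (V d) // IsEdge e}

/-- `γ : Fin (n+1) → V d` is a lattice path from `x` to `y`. -/
def IsPathFrom {d : ℕ} (n : ℕ) (γ : Fin (n + 1) → V d) (x y : V d) : Prop :=
  γ 0 = x ∧ γ (Fin.last n) = y ∧ ∀ i : Fin n, adj (γ i.castSucc) (γ i.succ)

/-- The passage time of a lattice path. -/
noncomputable def pathCost {d : ℕ} (wgt : Sym2 (V d) → ℝ) (n : ℕ)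
    (γ : Fin (n + 1) → V d) : ℝ :=
  ∑ i : Fin n, wgt s(γ i.castSucc, γ i.succ)

/-- The first-passage time `T(x,y)`. -/
noncomputable def T {d : ℕ} (wgt : Sym2 (V d) → ℝ) (x y : V d) : ℝ :=
  sInf {c : ℝ | ∃ n γ, IsPathFrom n γ x y ∧ c = pathCost wgt n γ}

/-- The lattice point `[x]` with `x ∈ [x] + [0,1)^d`. -/
noncomputable def latt {d : ℕ} (x : Fin d → ℝ) : V d := fun i => ⌊x i⌋

/-- The extension of `T` to `ℝ^d × ℝ^d`. -/
noncomputable def Treal {d : ℕ} (wgt : Sym2 (V d) → ℝ) (x y : Fin d → ℝ) : ℝ :=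
  T wgt (latt x) (latt y)

/-- The ball `B(t)`. -/
noncomputable def ball {d : ℕ} (wgt : Sym2 (V d) → ℝ) (t : ℝ) : Set (V d) :=
  {x | T wgt 0 x ≤ t}

/-- The edge boundary `∂ₑ A`. -/
def edgeBoundary {d : ℕ} (A : Set (V d)) : Set (Sym2 (V d)) :=
  {e | ∃ x y : V d, adj x y ∧ x ∈ A ∧ y ∉ A ∧ e = s(x, y)}

/-- The vertex exterior boundary `∂^ext A`. -/
def extVertexBoundary {d : ℕ} (A : Set (V d)) : Set (V d) :=
  {x | x ∉ A ∧ (∃ y ∈ A, adj x y) ∧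
    ∃ γ : ℕ → V d, γ 0 = x ∧ Function.Injective γ ∧
      (∀ n, adj (γ n) (γ (n + 1))) ∧ ∀ n, γ n ∉ A}

/-- The edge exterior boundary `∂ₑ^ext A`. -/
def extEdgeBoundary {d : ℕ} (A : Set (V d)) : Set (Sym2 (V d)) :=
  {e | ∃ x y : V d, adj x y ∧ y ∈ A ∧ x ∈ extVertexBoundary A ∧ e = s(x, y)}

/-- `x` and `y` are joined by a lattice path all of whose edges lie in `O`. -/
def ConnectedIn {d : ℕ} (O : Set (Sym2 (V d))) (x y : V d) : Prop :=
  ∃ n γ, IsPathFrom n γ x y ∧ ∀ i : Fin n, s(γ (Fin.castSucc i), γ i.succ) ∈ O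

/-- The open cluster of `x` for the set `O` of open edges. -/
def cluster {d : ℕ} (O : Set (Sym2 (V d))) (x : V d) : Set (V d) := {y | ConnectedIn O x y}

/-- `c` is an i.i.d. Bernoulli(p) bond configuration under `P`. -/
def IsBernoulliPerc {d : ℕ} {Ω : Type} [MeasurableSpace Ω] (P : Measure Ω) (p : ℝ)
    (c : Ω → Sym2 (V d) → Bool) : Prop :=
  (∀ e : Edge d, Measurable fun ω => c ω e.1) ∧
  iIndepFun (fun (e : Edge d) ω => c ω e.1) P ∧
  ∀ e : Edge d, P {ω | c ω e.1 = true} = ENNReal.ofReal p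

/-- The critical probability of Bernoulli bond percolation on `ℤ^d`. -/
noncomputable def pc (d : ℕ) : ℝ :=
  sSup {p : ℝ | 0 ≤ p ∧ p ≤ 1 ∧
    ∀ (Ω : Type) (_ : MeasurableSpace Ω) (P : Measure Ω), IsProbabilityMeasure P →
      ∀ c : Ω → Sym2 (V d) → Bool, IsBernoulliPerc P p c →
        P {ω | (cluster {e | c ω e = true} 0).Infinite} = 0}

/-- `w` is an i.i.d. family of nonnegative edge-weights with marginal distribution `μ`. -/
def IsIIDWeights {d : ℕ} {Ω : Type} [MeasurableSpace Ω] (P : Measure Ω) (μ : Measure ℝ)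
    (w : Ω → Sym2 (V d) → ℝ) : Prop :=
  (∀ e : Edge d, Measurable fun ω => w ω e.1) ∧
  iIndepFun (fun (e : Edge d) ω => w ω e.1) P ∧
  (∀ e : Edge d, Measure.map (fun ω => w ω e.1) P = μ) ∧
  ∀ (ω) (e : Edge d), 0 ≤ w ω e.1

/-- `Y`: the minimum of the weights of the `2d` edges incident to the origin. -/
noncomputable def Ymin {d : ℕ} (wgt : Sym2 (V d) → ℝ) : ℝ :=
  ⨅ z : {z : V d // adj 0 z}, wgt s(0, z.1)

/-- `E[Y ∧ s]`. -/
noncomputable def EYmin {d : ℕ} {Ω : Type} [MeasurableSpace Ω] (P : Measure Ω)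
    (w : Ω → Sym2 (V d) → ℝ) (s : ℝ) : ℝ :=
  ∫ ω, min (Ymin (w ω)) s ∂P

/-- the distribution function `F_Y` of `Y`. -/
noncomputable def FY {d : ℕ} {Ω : Type} [MeasurableSpace Ω] (P : Measure Ω)
    (w : Ω → Sym2 (V d) → ℝ) (s : ℝ) : ℝ :=
  (P {ω | Ymin (w ω) ≤ s}).toReal

/-- the first coordinate vector. -/
def e1 (d : ℕ) : V d := fun j => if (j : ℕ) = 0 then 1 else 0

/-- `ℓ^∞` norm of a lattice point, as a real number. -/
def linf {d : ℕ} (x : V d) : ℝ := ((Finset.univ.sup fun i => (x i).natAbs : ℕ) : ℝ)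

/-- `ℓ^2` norm on `ℝ^d`. -/
noncomputable def l2 {d : ℕ} (x : Fin d → ℝ) : ℝ := Real.sqrt (∑ i, x i ^ 2)

end FPPBoundary
namespace FPPBoundary

/-- `W` is *-connected. -/
def starConn {d : ℕ} (W : Finset (V d)) : Prop :=
  ∀ u ∈ W, ∀ v ∈ W, ∃ (k : ℕ) (γ : Fin (k + 1) → V d),
    γ 0 = u ∧ γ (Fin.last k) = v ∧ (∀ i, γ i ∈ W) ∧
    ∀ i : Fin k, (Finset.univ.sup fun j => ((γ i.castSucc - γ i.succ) j).natAbs) ≤ 1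

/-- `W` encloses `0`: every infinite vertex-self-avoiding lattice path starting at `0`
meets `W`. -/
def encloses0 {d : ℕ} (W : Finset (V d)) : Prop :=
  ∀ γ : ℕ → V d, γ 0 = 0 → Function.Injective γ →
    (∀ n, adj (γ n) (γ (n + 1))) → ∃ n, γ n ∈ W

/-- `W` is an `α`-bad contour for the weights `wgt`. -/
def badContour {d : ℕ} (α : ℝ) (wgt : Sym2 (V d) → ℝ) (W : Finset (V d)) : Prop :=
  starConn W ∧ encloses0 W ∧
    (W.card : ℝ) ≤ 2 * ({v ∈ (W : Set (V d)) | ∃ u, adj v u ∧ α < wgt s(v, u)}.ncard : ℝ)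

end FPPBoundary
namespace FPPBoundary


section ContourCounting




abbrev Slot (d : ℕ) := Fin d → Fin 3

def offs {d : ℕ} (a : Slot d) : V d := fun i => (a i : ℤ) - 1

lemma offs_inj {d : ℕ} : Function.Injective (offs (d := d)) := by
  intro a b h
  funext i
  have := congrFun h i
  simp only [offs, sub_left_inj] at this
  exact Fin.ext (by exact_mod_cast this)

lemma exists_slot {d : ℕ} {u w : V d} (h : ∀ i, (w i - u i).natAbs ≤ 1) :
    ∃ a : Slot d, w = u + offs a := by
  refine ⟨fun i => ⟨(w i - u i + 1).toNat, by have := h i; omega⟩, ?_⟩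
  funext i
  have := h i
  simp only [offs, Pi.add_apply]
  omega

noncomputable def stepW {d : ℕ} (f : ℕ → List (V d) → V d → Finset (Slot d)) (i : ℕ)
    (L : List (V d)) : List (V d) :=
  if h : i < L.length then
    L ++ ((f i L (L.get ⟨i, h⟩)).toList.map fun a => L.get ⟨i, h⟩ + offs a)
  else L

noncomputable def runW {d : ℕ} (f : ℕ → List (V d) → V d → Finset (Slot d)) (r : V d)
    (n : ℕ) : List (V d) :=
  Nat.rec [r] (fun i L => stepW f i L) n

@[simp] lemma runW_zero {d : ℕ} (f : ℕ → List (V d) → V d → Finset (Slot d)) (r : V d) :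
    runW f r 0 = [r] := rfl

@[simp] lemma runW_succ {d : ℕ} (f : ℕ → List (V d) → V d → Finset (Slot d)) (r : V d)
    (i : ℕ) : runW f r (i + 1) = stepW f i (runW f r i) := rfl

lemma prefix_stepW {d : ℕ} (f : ℕ → List (V d) → V d → Finset (Slot d)) (i : ℕ)
    (L : List (V d)) : L <+: stepW f i L := by
  unfold stepW; split
  · exact List.prefix_append _ _
  · exact List.prefix_rfl

lemma runW_prefix {d : ℕ} (f : ℕ → List (V d) → V d → Finset (Slot d)) (r : V d)
    {i j : ℕ} (hij : i ≤ j) : (runW f r i) <+: (runW f r j) := by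
  induction j with
  | zero => simp_all
  | succ j ih =>
    rcases Nat.lt_or_ge i (j+1) with hlt | hge
    · exact (ih (by omega)).trans (by rw [runW_succ]; exact prefix_stepW f j _)
    · have : i = j + 1 := le_antisymm hij hge
      subst this; exact List.prefix_rfl


variable {d : ℕ}

noncomputable def exf (W : Finset (V d)) : ℕ → List (V d) → V d → Finset (Slot d) :=
  fun _ L u => Finset.univ.filter fun a => u + offs a ∈ W ∧ u + offs a ∉ L

noncomputable def exL (W : Finset (V d)) (r : V d) (i : ℕ) : List (V d) := runW (exf W) r i

noncomputable def usedS (W : Finset (V d)) (r : V d) (i : ℕ) : Finset (Slot d) :=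
  if h : i < (exL W r i).length then exf W i (exL W r i) ((exL W r i).get ⟨i, h⟩) else ∅

noncomputable def codeS (W : Finset (V d)) (r : V d) (N : ℕ) : Finset (ℕ × Slot d) :=
  (Finset.range N).biUnion fun i => ({i} : Finset ℕ) ×ˢ usedS W r i

noncomputable def decf (S : Finset (ℕ × Slot d)) : ℕ → List (V d) → V d → Finset (Slot d) :=
  fun i _ _ => Finset.univ.filter fun a => (i, a) ∈ S

lemma mem_codeS {W : Finset (V d)} {r : V d} {N i : ℕ} {a : Slot d} :
    (i, a) ∈ codeS W r N ↔ i < N ∧ a ∈ usedS W r i := by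
  simp [codeS, Finset.mem_biUnion, Finset.mem_product, Finset.mem_range]

lemma decode_eq (W : Finset (V d)) (r : V d) (N : ℕ) {i : ℕ} (hi : i ≤ N) :
    runW (decf (codeS W r N)) r i = exL W r i := by
  induction i with
  | zero => simp [exL]
  | succ i ih =>
    have ih' := ih (by omega)
    rw [exL, runW_succ, runW_succ, ← exL, ih']
    unfold stepW
    split
    · next h =>
      have h1 : usedS W r i = exf W i (exL W r i) ((exL W r i).get ⟨i, h⟩) := dif_pos h
      have h2 : decf (codeS W r N) i (exL W r i) ((exL W r i).get ⟨i, h⟩)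
          = usedS W r i := by
        ext a
        simp only [decf, Finset.mem_filter, Finset.mem_univ, true_and, mem_codeS]
        exact ⟨fun ⟨_, ha⟩ => ha, fun ha => ⟨by omega, ha⟩⟩
      rw [h2, h1]
    · rfl

lemma exL_nodup (W : Finset (V d)) (r : V d) (i : ℕ) : (exL W r i).Nodup := by
  induction i with
  | zero => simp [exL]
  | succ i ih =>
    rw [exL, runW_succ, ← exL]
    unfold stepW
    split
    · next h =>
      refine List.Nodup.append ih ?_ ?_
      · refine (Finset.nodup_toList _).map ?_
        intro a b hab
        exact offs_inj (add_left_cancel hab)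
      · intro x hx hx2
        simp only [List.mem_map, Finset.mem_toList, exf, Finset.mem_filter] at hx2
        obtain ⟨a, ⟨-, -, ha⟩, rfl⟩ := hx2
        exact ha hx
    · exact ih

lemma exL_subset (W : Finset (V d)) {r : V d} (hr : r ∈ W) (i : ℕ) :
    ∀ x ∈ exL W r i, x ∈ W := by
  induction i with
  | zero =>
    intro x hx
    rw [exL, runW_zero, List.mem_singleton] at hx
    rwa [hx]
  | succ i ih =>
    rw [exL, runW_succ, ← exL]
    unfold stepW
    split
    · intro x hx
      rcases List.mem_append.1 hx with hx | hx
      · exact ih x hx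
      · simp only [List.mem_map, Finset.mem_toList, exf, Finset.mem_filter] at hx
        obtain ⟨a, ⟨-, ha, -⟩, rfl⟩ := hx
        exact ha
    · exact ih

lemma exL_length_le (W : Finset (V d)) {r : V d} (hr : r ∈ W) (i : ℕ) :
    (exL W r i).length ≤ W.card := by
  rw [← List.toFinset_card_of_nodup (exL_nodup W r i)]
  exact Finset.card_le_card (fun x hx => exL_subset W hr i x (List.mem_toFinset.1 hx))

lemma exL_stuck (W : Finset (V d)) (r : V d) {i j : ℕ} (hij : i ≤ j)
    (h : (exL W r i).length ≤ i) : exL W r j = exL W r i := by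
  induction j with
  | zero =>
    have : i = 0 := by omega
    rw [this]
  | succ j ih =>
    rcases Nat.lt_or_ge i (j+1) with hlt | hge
    · have hj := ih (by omega)
      rw [exL, runW_succ, ← exL, hj]
      unfold stepW
      rw [dif_neg (by omega)]
    · have : i = j + 1 := le_antisymm hij hge
      rw [this]


lemma exL_closure (W : Finset (V d)) {r : V d} (hr : r ∈ W) {u : V d}
    (hu : u ∈ exL W r W.card) (a : Slot d) (hw : u + offs a ∈ W) :
    u + offs a ∈ exL W r W.card := by
  set N := W.card with hN
  obtain ⟨p, hp⟩ := List.mem_iff_get.1 hu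
  have hplen : (p : ℕ) < (exL W r N).length := p.2
  have hlenN : (exL W r N).length ≤ N := exL_length_le W hr N
  by_cases hcase : (p : ℕ) < (exL W r (p : ℕ)).length
  · -- step p executed
    have hpre : exL W r (p : ℕ) <+: exL W r N := runW_prefix _ _ (by omega)
    obtain ⟨t, ht⟩ := hpre
    have hget : (exL W r (p : ℕ)).get ⟨(p : ℕ), hcase⟩ = u := by
      rw [← hp]
      simp only [List.get_eq_getElem]
      simp only [← ht]
      exact (List.getElem_append_left hcase).symm
    by_cases hin : u + offs a ∈ exL W r (p : ℕ)
    · exact (runW_prefix _ _ (by omega : (p:ℕ) ≤ N)).subset hin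
    · have hmem : u + offs a ∈ exL W r ((p : ℕ) + 1) := by
        rw [exL, runW_succ, ← exL]
        unfold stepW
        rw [dif_pos hcase]
        refine List.mem_append.2 (Or.inr ?_)
        simp only [List.mem_map, Finset.mem_toList, exf, Finset.mem_filter,
          Finset.mem_univ, true_and, hget]
        exact ⟨a, ⟨hw, hin⟩, rfl⟩
      exact (runW_prefix _ _ (by omega : (p:ℕ) + 1 ≤ N)).subset hmem
  · exfalso
    have h3 := exL_stuck W r (by omega : (p : ℕ) ≤ N) (by omega)
    have h4 : (exL W r N).length = (exL W r (p : ℕ)).length := congrArg List.length h3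
    omega

lemma exL_coverage (W : Finset (V d)) (hconn : starConn W) {r : V d} (hr : r ∈ W) :
    ∀ v ∈ W, v ∈ exL W r W.card := by
  intro v hv
  obtain ⟨k, γ, h0, hlast, hmem, hstep⟩ := hconn r hr v hv
  have hroot : r ∈ exL W r W.card := by
    refine (runW_prefix _ _ (Nat.zero_le _)).subset ?_
    simp [exL]
  have key : ∀ i : ℕ, ∀ h : i < k + 1, γ ⟨i, h⟩ ∈ exL W r W.card := by
    intro i
    induction i with
    | zero =>
      intro h
      have e : (⟨0, h⟩ : Fin (k+1)) = 0 := rfl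
      rw [e, h0]; exact hroot
    | succ i ih =>
      intro h
      have hi : i < k + 1 := by omega
      have hik : i < k := by omega
      have hu := ih hi
      have hsup := hstep ⟨i, hik⟩
      have hcoord : ∀ j, ((γ ⟨i+1, h⟩ j) - (γ ⟨i, hi⟩ j)).natAbs ≤ 1 := by
        intro j
        have h1 : ((γ (Fin.castSucc ⟨i, hik⟩) - γ (Fin.succ ⟨i, hik⟩)) j).natAbs ≤ 1 :=
          le_trans (Finset.le_sup (f := fun j => ((γ (Fin.castSucc ⟨i, hik⟩) - γ (Fin.succ ⟨i, hik⟩)) j).natAbs) (Finset.mem_univ j)) hsup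
        have e1 : Fin.castSucc ⟨i, hik⟩ = (⟨i, hi⟩ : Fin (k+1)) := rfl
        have e2 : Fin.succ ⟨i, hik⟩ = (⟨i+1, h⟩ : Fin (k+1)) := rfl
        rw [e1, e2, Pi.sub_apply] at h1
        omega
      obtain ⟨a, ha⟩ := exists_slot hcoord
      rw [ha]
      exact exL_closure W hr hu a (by rw [← ha]; exact hmem _)
  have := key k (by omega)
  have e : (⟨k, by omega⟩ : Fin (k+1)) = Fin.last k := rfl
  rw [e, hlast] at this
  exact this

lemma exL_toFinset (W : Finset (V d)) (hconn : starConn W) {r : V d} (hr : r ∈ W) :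
    (exL W r W.card).toFinset = W := by
  apply Finset.Subset.antisymm
  · intro x hx
    exact exL_subset W hr _ x (List.mem_toFinset.1 hx)
  · intro x hx
    exact List.mem_toFinset.2 (exL_coverage W hconn hr x hx)

lemma exL_length (W : Finset (V d)) (hconn : starConn W) {r : V d} (hr : r ∈ W) :
    (exL W r W.card).length = W.card := by
  rw [← List.toFinset_card_of_nodup (exL_nodup W r W.card), exL_toFinset W hconn hr]

lemma length_exL_succ (W : Finset (V d)) (r : V d) (i : ℕ) :
    (exL W r (i+1)).length = (exL W r i).length + (usedS W r i).card := by
  rw [exL, runW_succ, ← exL]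
  unfold stepW usedS
  by_cases h : i < (exL W r i).length
  · rw [dif_pos h, dif_pos h]
    simp [List.length_append, Finset.length_toList]
  · rw [dif_neg h, dif_neg h]
    simp

lemma exL_length_pos (W : Finset (V d)) (r : V d) (i : ℕ) : 1 ≤ (exL W r i).length := by
  have := (runW_prefix (exf W) r (Nat.zero_le i)).length_le
  simpa [exL] using this

lemma sum_usedS (W : Finset (V d)) (r : V d) (N : ℕ) :
    ∑ i ∈ Finset.range N, (usedS W r i).card = (exL W r N).length - 1 := by
  induction N with
  | zero => simp [exL]
  | succ N ih =>
    rw [Finset.sum_range_succ, ih, length_exL_succ]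
    have := exL_length_pos W r N
    omega

lemma codeS_card (W : Finset (V d)) (r : V d) (N : ℕ) :
    (codeS W r N).card = (exL W r N).length - 1 := by
  rw [codeS, Finset.card_biUnion]
  · have h : ∀ i ∈ Finset.range N, (({i} : Finset ℕ) ×ˢ usedS W r i).card = (usedS W r i).card := by
      intro i _
      simp [Finset.card_product]
    rw [Finset.sum_congr rfl h, sum_usedS]
  · intro i hi j hj hij
    simp only [Finset.disjoint_left]
    rintro ⟨x, a⟩ hx hy
    simp only [Finset.mem_product, Finset.mem_singleton] at hx hy
    exact hij (hx.1 ▸ hy.1)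

lemma codeS_subset (W : Finset (V d)) (r : V d) (N : ℕ) :
    codeS W r N ⊆ Finset.range N ×ˢ (Finset.univ : Finset (Slot d)) := by
  rintro ⟨i, a⟩ h
  rw [mem_codeS] at h
  simp [Finset.mem_product, Finset.mem_range, h.1]


/-- the ray point `k e₁` (with sign `s`). -/
def rayPt (d : ℕ) (t : ℤ) : V d := fun j => if (j : ℕ) = 0 then t else 0

lemma rayPt_adj {d : ℕ} (hd : 0 < d) (t : ℤ) : adj (rayPt d t) (rayPt d (t+1)) := by
  unfold adj rayPt
  rw [Finset.sum_eq_single (⟨0, hd⟩ : Fin d)]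
  · simp
  · intro b _ hb
    have : (b : ℕ) ≠ 0 := fun h => hb (Fin.ext h)
    simp [this]
  · simp

lemma rayPt_inj {d : ℕ} (hd : 0 < d) : Function.Injective (rayPt d) := by
  intro a b h
  have := congrFun h ⟨0, hd⟩
  simpa [rayPt] using this

lemma exists_ray_hit {d : ℕ} (hd : 0 < d) {W : Finset (V d)} (hW : encloses0 W)
    (s : ℤ) (hs : s = 1 ∨ s = -1) : ∃ k : ℕ, rayPt d (s * k) ∈ W := by
  obtain ⟨n, hn⟩ := hW (fun n => rayPt d (s * n)) (by funext j; simp [rayPt])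
    (fun a b hab => by
      have := rayPt_inj hd hab
      rcases hs with h | h <;> { subst h; omega })
    (fun n => by
      rcases hs with h | h
      · subst h; simpa using rayPt_adj hd n
      · subst h
        have : adj (rayPt d (-(n+1))) (rayPt d (-(n+1)+1)) := rayPt_adj hd _
        have hsymm : ∀ x y : V d, adj x y → adj y x := by
          intro x y hxy
          unfold adj at *
          rw [← hxy]
          exact Finset.sum_congr rfl (fun i _ => abs_sub_comm _ _)
        have := hsymm _ _ this
        simpa [show -(n:ℤ) - 1 = -((n:ℤ)+1) by ring, show -((n:ℤ)+1)+1 = -(n:ℤ) by ring,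
          Nat.cast_succ] using this)
  exact ⟨n, hn⟩

lemma discrete_ivt {m : ℕ} (f : ℕ → ℤ) (hstep : ∀ i < m, (f (i+1) - f i).natAbs ≤ 1)
    {t : ℤ} (h0 : t ≤ f 0) (hm : f m ≤ t) : ∃ i ≤ m, f i = t := by
  classical
  set F := (Finset.range (m+1)).filter (fun i => t ≤ f i) with hF
  have hne : F.Nonempty := ⟨0, by simp [hF]; omega⟩
  set i0 := F.max' hne with hi0
  have hi0mem : i0 ∈ F := F.max'_mem hne
  simp only [hF, Finset.mem_filter, Finset.mem_range] at hi0mem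
  rcases Nat.lt_or_ge i0 m with hlt | hge
  · refine ⟨i0, by omega, ?_⟩
    have hnot : i0 + 1 ∉ F := fun h => by
      have := F.le_max' _ h
      omega
    simp only [hF, Finset.mem_filter, Finset.mem_range, not_and, not_le] at hnot
    have h1 : f (i0+1) < t := hnot (by omega)
    have h2 := hstep i0 hlt
    omega
  · have him : i0 = m := by omega
    rw [him] at hi0mem
    exact ⟨m, le_rfl, by omega⟩

/-- A contour contains a point `k e₁` with `k < |W|`. -/
lemma exists_root {d : ℕ} (hd : 0 < d) {W : Finset (V d)} (hconn : starConn W)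
    (hW : encloses0 W) : ∃ k : ℕ, k < W.card ∧ rayPt d (k : ℤ) ∈ W := by
  obtain ⟨kp, hkp⟩ := exists_ray_hit hd hW 1 (Or.inl rfl)
  obtain ⟨kn, hkn⟩ := exists_ray_hit hd hW (-1) (Or.inr rfl)
  simp only [one_mul] at hkp
  refine ⟨kp, ?_, hkp⟩
  obtain ⟨k, γ, h0, hlast, hmem, hstep⟩ := hconn _ hkp _ hkn
  -- first coordinates along γ
  set f : ℕ → ℤ := fun i => γ ⟨min i k, by omega⟩ ⟨0, hd⟩ with hf
  have hstep' : ∀ i < k, (f (i+1) - f i).natAbs ≤ 1 := by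
    intro i hi
    have hsup := hstep ⟨i, hi⟩
    have h1 : ((γ (Fin.castSucc ⟨i, hi⟩) - γ (Fin.succ ⟨i, hi⟩)) ⟨0, hd⟩).natAbs ≤ 1 :=
      le_trans (Finset.le_sup (f := fun j => ((γ (Fin.castSucc ⟨i, hi⟩) - γ (Fin.succ ⟨i, hi⟩)) j).natAbs) (Finset.mem_univ _)) hsup
    rw [Pi.sub_apply] at h1
    have e1 : Fin.castSucc ⟨i, hi⟩ = (⟨min i k, by omega⟩ : Fin (k+1)) := by
      simp [Fin.ext_iff]; omega
    have e2 : Fin.succ ⟨i, hi⟩ = (⟨min (i+1) k, by omega⟩ : Fin (k+1)) := by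
      simp [Fin.ext_iff]; omega
    rw [e1, e2] at h1
    simp only [hf]
    omega
  have hf0 : f 0 = kp := by
    have : (⟨min 0 k, by omega⟩ : Fin (k+1)) = 0 := by simp [Fin.ext_iff]
    simp only [hf, this, h0, rayPt]
    simp
  have hfk : f k = -kn := by
    have : (⟨min k k, by omega⟩ : Fin (k+1)) = Fin.last k := by simp [Fin.ext_iff]
    simp only [hf, this, hlast, rayPt]
    simp
  -- every integer t in [-kn, kp] is a first coordinate of a point of W
  have hall : ∀ t : ℤ, -(kn:ℤ) ≤ t → t ≤ kp →
      t ∈ W.image (fun v : V d => v ⟨0, hd⟩) := by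
    intro t ht1 ht2
    obtain ⟨i, him, hit⟩ := discrete_ivt (t := t) f hstep' (by rw [hf0]; exact ht2) (by rw [hfk]; exact ht1)
    exact Finset.mem_image.2 ⟨γ ⟨min i k, by omega⟩, hmem _, hit⟩
  clear_value f
  have hsub : Finset.Icc (-(kn:ℤ)) (kp:ℤ) ⊆ W.image (fun v : V d => v ⟨0, hd⟩) := by
    intro t ht
    rw [Finset.mem_Icc] at ht
    exact hall t ht.1 ht.2
  have hcard := Finset.card_le_card hsub
  rw [Int.card_Icc] at hcard
  have himg : (W.image (fun v : V d => v ⟨0, hd⟩)).card ≤ W.card := Finset.card_image_le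
  clear hall hsub hstep' hf0 hfk hstep hmem h0 hlast hkp hkn hconn hW
  clear hf f γ
  generalize hgen : (Finset.image (fun v : V d => v ⟨0, hd⟩) W).card = c at hcard himg
  clear hgen
  omega



lemma choose_step (Δ n : ℕ) (hΔ : 9 ≤ Δ) (hn : 1 ≤ n) :
    Nat.choose (n * Δ) (n - 1) ≤ Nat.choose (n * Δ) n := by
  have h9 : n * 9 ≤ n * Δ := Nat.mul_le_mul_left n hΔ
  have hhalf : n - 1 < (n * Δ) / 2 := by omega
  have := Nat.choose_le_succ_of_lt_half_left hhalf
  rwa [Nat.sub_add_cancel hn] at this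

lemma central_bound (Δ n : ℕ) (hΔ : 9 ≤ Δ) (hn : 1 ≤ n) :
    Nat.choose (Δ * n) n * (n ^ n * ((Δ - 1) * n) ^ ((Δ - 1) * n)) ≤ (Δ * n) ^ (Δ * n) := by
  have hle : n ≤ Δ * n := Nat.le_mul_of_pos_left n (by omega)
  have he : (Δ - 1) * n = Δ * n - n := by
    rw [Nat.sub_mul, one_mul]
  have hxy : n + (Δ - 1) * n = Δ * n := by omega
  have hsum := add_pow (R := ℕ) n ((Δ - 1) * n) (Δ * n)
  rw [hxy] at hsum
  have hmem : n ∈ Finset.range (Δ * n + 1) := Finset.mem_range.2 (by omega)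
  have hterm := Finset.single_le_sum
    (f := fun k => n ^ k * ((Δ - 1) * n) ^ (Δ * n - k) * Nat.choose (Δ * n) k)
    (fun k _ => Nat.zero_le _) hmem
  simp only [Nat.cast_id] at hsum hterm
  rw [← hsum] at hterm
  calc Nat.choose (Δ * n) n * (n ^ n * ((Δ - 1) * n) ^ ((Δ - 1) * n))
      = n ^ n * ((Δ - 1) * n) ^ (Δ * n - n) * Nat.choose (Δ * n) n := by rw [← he]; ring
    _ ≤ (Δ * n) ^ (Δ * n) := hterm

lemma real_choose_bound (Δ n : ℕ) (hΔ : 9 ≤ Δ) (hn : 1 ≤ n) :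
    ((Nat.choose (n * Δ) (n - 1) : ℕ) : ℝ) ≤ ((Δ : ℝ) ^ Δ / ((Δ : ℝ) - 1) ^ (Δ - 1)) ^ n := by
  rw [mul_comm n Δ]
  have h0 := choose_step Δ n hΔ hn
  rw [mul_comm n Δ] at h0
  have h1 : ((Nat.choose (Δ * n) (n - 1) : ℕ) : ℝ) ≤ ((Nat.choose (Δ * n) n : ℕ) : ℝ) := by
    exact_mod_cast h0
  refine h1.trans ?_
  set e := (Δ - 1) * n with hedef
  have hcast : ((Δ - 1 : ℕ) : ℝ) = (Δ : ℝ) - 1 := by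
    have : (1 : ℕ) ≤ Δ := by omega
    push_cast [Nat.cast_sub this]
    ring
  have hcentral : ((Nat.choose (Δ * n) n : ℕ) : ℝ) * ((n : ℝ) ^ n * (((Δ : ℝ) - 1) * n) ^ e)
      ≤ ((Δ : ℝ) * n) ^ (Δ * n) := by
    have := central_bound Δ n hΔ hn
    have hc := (Nat.cast_le (α := ℝ)).2 this
    push_cast at hc
    rw [hcast] at hc
    convert hc using 2
  have hΔ1 : (0 : ℝ) < (Δ : ℝ) - 1 := by
    have : (9 : ℝ) ≤ (Δ : ℝ) := by exact_mod_cast hΔ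
    linarith
  have hnpos : (0 : ℝ) < (n : ℝ) := by exact_mod_cast hn
  have hpow : (0 : ℝ) < ((Δ : ℝ) - 1) ^ e := pow_pos hΔ1 e
  have hsplit : (n : ℝ) ^ (Δ * n) = (n : ℝ) ^ n * (n : ℝ) ^ e := by
    rw [← pow_add]
    congr 1
    have hle : n ≤ Δ * n := Nat.le_mul_of_pos_left n (by omega)
    have : (Δ - 1) * n = Δ * n - n := by rw [Nat.sub_mul, one_mul]
    omega
  have hnn : (0 : ℝ) < (n : ℝ) ^ (Δ * n) := pow_pos hnpos _
  rw [div_pow, ← pow_mul, ← pow_mul, le_div_iff₀ (pow_pos hΔ1 _)]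
  rw [← mul_le_mul_iff_of_pos_right hnn]
  calc ((Nat.choose (Δ * n) n : ℕ) : ℝ) * ((Δ : ℝ) - 1) ^ ((Δ - 1) * n) * (n : ℝ) ^ (Δ * n)
      = ((Nat.choose (Δ * n) n : ℕ) : ℝ) * ((n : ℝ) ^ n * (((Δ : ℝ) - 1) * n) ^ e) := by
        rw [hsplit, mul_pow, hedef]; ring
    _ ≤ ((Δ : ℝ) * n) ^ (Δ * n) := hcentral
    _ = (Δ : ℝ) ^ (Δ * n) * (n : ℝ) ^ (Δ * n) := by rw [mul_pow]

end ContourCounting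

/-- Lemma 3.4: the number of *-connected sets of cardinality `n` enclosing `0` is at most
`n (3^d)^{3^d} / (3^d - 1)^{3^d - 1})^n`. -/
theorem number_of_contours (d : ℕ) (hd : 2 ≤ d) (n : ℕ) :
    ({W : Finset (V d) | starConn W ∧ encloses0 W ∧ W.card = n}.encard : ℝ≥0∞)
      ≤ ENNReal.ofReal
          ((n : ℝ) * (((3 : ℝ) ^ d) ^ (3 ^ d) / ((3 : ℝ) ^ d - 1) ^ (3 ^ d - 1)) ^ n) := by
  have hd0 : 0 < d := by omega
  rcases Nat.eq_zero_or_pos n with rfl | hn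
  · -- n = 0 : the set is empty
    have hempty : {W : Finset (V d) | starConn W ∧ encloses0 W ∧ W.card = 0} = ∅ := by
      ext W
      simp only [Set.mem_setOf_eq, Set.mem_empty_iff_false, iff_false, not_and]
      intro _ henc hcard
      rw [Finset.card_eq_zero] at hcard
      subst hcard
      obtain ⟨m, hm⟩ := henc (fun m => rayPt d ((1 : ℤ) * m)) (by funext j; simp [rayPt])
        (fun a b hab => by
          have := rayPt_inj hd0 hab
          omega)
        (fun m => by simpa using rayPt_adj hd0 m)
      simp at hm
    rw [hempty, Set.encard_empty]
    simp
  · set Δ := 3 ^ d with hΔdef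
    have hΔ : 9 ≤ Δ := by
      calc (9 : ℕ) = 3 ^ 2 := by norm_num
        _ ≤ 3 ^ d := Nat.pow_le_pow_right (by norm_num) hd
    classical
    set dom : Finset (ℕ × Finset (ℕ × Slot d)) :=
      Finset.range n ×ˢ ((Finset.range n ×ˢ (Finset.univ : Finset (Slot d))).powersetCard (n - 1))
      with hdom
    set F : ℕ × Finset (ℕ × Slot d) → Finset (V d) :=
      fun p => (runW (decf p.2) (rayPt d (p.1 : ℤ)) n).toFinset with hF
    have hsub : {W : Finset (V d) | starConn W ∧ encloses0 W ∧ W.card = n} ⊆ F '' ↑dom := by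
      rintro W ⟨hconn, henc, hcard⟩
      obtain ⟨k, hk, hkW⟩ := exists_root hd0 hconn henc
      refine ⟨(k, codeS W (rayPt d (k : ℤ)) n), ?_, ?_⟩
      · rw [hdom]
        simp only [Finset.coe_product, Set.mem_prod, Finset.mem_coe, Finset.mem_range,
          Finset.mem_powersetCard]
        refine ⟨by omega, codeS_subset _ _ _, ?_⟩
        rw [codeS_card]
        have h1 : (exL W (rayPt d (k : ℤ)) n).length = n := by
          rw [← hcard]
          exact exL_length W hconn hkW
        omega
      · simp only [hF]
        rw [decode_eq W (rayPt d (k : ℤ)) n le_rfl, ← hcard]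
        exact exL_toFinset W hconn hkW
    have h1' : {W : Finset (V d) | starConn W ∧ encloses0 W ∧ W.card = n}.encard
        ≤ (dom.card : ℕ∞) := by
      calc {W : Finset (V d) | starConn W ∧ encloses0 W ∧ W.card = n}.encard
          ≤ (F '' ↑dom).encard := Set.encard_mono hsub
        _ ≤ (↑dom : Set (ℕ × Finset (ℕ × Slot d))).encard := Set.encard_image_le _ _
        _ = dom.card := Set.encard_coe_eq_coe_finsetCard _
    have h1 : ({W : Finset (V d) | starConn W ∧ encloses0 W ∧ W.card = n}.encard : ℝ≥0∞)
        ≤ (dom.card : ℝ≥0∞) := by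
      exact_mod_cast ENat.toENNReal_le.2 h1'
    have hcardslot : Fintype.card (Slot d) = Δ := by
      simp [Slot, hΔdef]
    have hdomcard : dom.card = n * Nat.choose (n * Δ) (n - 1) := by
      rw [hdom, Finset.card_product, Finset.card_range, Finset.card_powersetCard,
        Finset.card_product, Finset.card_range, Finset.card_univ, hcardslot]
    refine le_trans h1 ?_
    rw [← ENNReal.ofReal_natCast]
    apply ENNReal.ofReal_le_ofReal
    rw [hdomcard]
    push_cast
    have hbase : ((Δ : ℕ) : ℝ) = (3 : ℝ) ^ d := by
      rw [hΔdef]; push_cast; ring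
    have hmain := real_choose_bound Δ n hΔ hn
    rw [hbase] at hmain
    calc (n : ℝ) * ((Nat.choose (n * Δ) (n - 1) : ℕ) : ℝ)
        ≤ (n : ℝ) * (((3 : ℝ) ^ d) ^ Δ / ((3 : ℝ) ^ d - 1) ^ (Δ - 1)) ^ n := by
          apply mul_le_mul_of_nonneg_left _ (by positivity)
          exact_mod_cast hmain
      _ = (n : ℝ) * (((3 : ℝ) ^ d) ^ (3 ^ d) / ((3 : ℝ) ^ d - 1) ^ (3 ^ d - 1)) ^ n := by
          rw [hΔdef]


end FPPBoundary
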